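/- Let K be a finite field with q^n elements and let f ∈ K[X] satisfy f^q − f = (X^{q^n} − X)·f′. If the coefficient of X^k in f is nonzero, then k can be written as k = a_{n−1}q^{n−1} + a_{n−2}q^{n−2} + ⋯ + a_1 q + a_0 with each a_i ∈ {0,1}; that is, every base-q digit of k is 0 or 1. -/

import Mathlib

open Polynomial

theorem stmt11 (q n : ℕ) (hq : IsPrimePow q) (hn : 1 ≤ n)
    {K : Type*} [Field K] [Fintype K] (hK : Fintype.card K = q ^ n)
    (f : K[X]) (heq : f ^ q - f = (X ^ q ^ n - X) * f.derivative)
    (k : ℕ) (hk : f.coeff k ≠ 0) :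
    ∃ a : ℕ → ℕ, (∀ i, a i ≤ 1) ∧ k = ∑ i ∈ Finset.range n, a i * q ^ i := by
  classical
  obtain ⟨p, e, hp0, he, hpe⟩ := hq
  have hp : p.Prime := Nat.prime_iff.mpr hp0
  have hq2 : 2 ≤ q := by
    calc 2 ≤ p := hp.two_le
    _ ≤ p ^ e := Nat.le_self_pow (by omega) p
    _ = q := hpe
  haveI hFp : Fact p.Prime := ⟨hp⟩
  have hcard0 : ((Fintype.card K : ℕ) : K) = 0 := FiniteField.cast_card_eq_zero K
  have hqK : (q : K) = 0 := by
    have h1 : ((q : K)) ^ n = 0 := by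
      rw [← Nat.cast_pow, ← hK, hcard0]
    exact pow_eq_zero_iff (by omega) |>.mp h1
  have hpK : (p : K) = 0 := by
    have h1 : ((p : K)) ^ e = 0 := by rw [← Nat.cast_pow, hpe, hqK]
    exact pow_eq_zero_iff (by omega) |>.mp h1
  haveI hcharK : CharP K p := by
    haveI h1 : CharP K (ringChar K) := ringChar.charP K
    have h2 : ringChar K ∣ p := (CharP.cast_eq_zero_iff K (ringChar K) p).mp hpK
    have h3 : (ringChar K).Prime := CharP.char_is_prime K (ringChar K)
    have h4 : ringChar K = p := (Nat.prime_dvd_prime_iff_eq h3 hp).mp h2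
    rwa [h4] at h1
  -- coefficients of f ^ q
  have hcq : ∀ m : ℕ, (f ^ q).coeff m = if q ∣ m then f.coeff (m / q) ^ q else 0 := by
    intro m
    have hfq : f ^ q = (expand K q f).map (frobenius K p ^ e) := by
      rw [← hpe, ← iterateFrobenius_eq_pow, map_iterateFrobenius_expand]
    rw [hfq, coeff_map, coeff_expand (by omega : 0 < q), apply_ite (frobenius K p ^ e), map_zero]
    congr 1
    show (frobenius K p)^[e] (f.coeff (m / q)) = f.coeff (m / q) ^ q
    rw [iterate_frobenius, hpe]
  -- the master coefficient relation
  have hE : ∀ m : ℕ, (f ^ q).coeff m - f.coeff m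
      = (if q ^ n ≤ m then f.derivative.coeff (m - q ^ n) else 0)
        - (if 1 ≤ m then f.derivative.coeff (m - 1) else 0) := by
    intro m
    have h1 : (f ^ q - f).coeff m = ((X ^ q ^ n - X : K[X]) * f.derivative).coeff m := by
      rw [heq]
    have h2 : (X ^ q ^ n - X : K[X]) * f.derivative
        = f.derivative * X ^ q ^ n - f.derivative * X ^ 1 := by ring
    rwa [coeff_sub, h2, coeff_sub, coeff_mul_X_pow', coeff_mul_X_pow'] at h1
  -- degree bound
  have hbnd : ∀ m : ℕ, f.coeff m ≠ 0 → m * (q - 1) ≤ q ^ n - 1 := by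
    intro m hm
    have hmD : m ≤ f.natDegree := le_natDegree_of_ne_zero hm
    have hD : f.natDegree * (q - 1) ≤ q ^ n - 1 := by
      rcases eq_or_ne f.derivative 0 with h0 | h0
      · have hfq : f ^ q = f := by
          have : f ^ q - f = 0 := by rw [heq, h0, mul_zero]
          rwa [sub_eq_zero] at this
        have hd1 : (f ^ q).natDegree = f.natDegree := by rw [hfq]
        rw [natDegree_pow] at hd1
        have : f.natDegree = 0 := by nlinarith [f.natDegree.zero_le]
        simp [this]
      · rcases Nat.eq_zero_or_pos f.natDegree with hD0 | hD0
        · simp [hD0]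
        · have hlt1 : f.natDegree < (f ^ q).natDegree := by
            rw [natDegree_pow]; nlinarith
          have h1 : (f ^ q - f).natDegree = q * f.natDegree := by
            rw [natDegree_sub_eq_left_of_natDegree_lt hlt1, natDegree_pow]
          have h3 : ((X ^ q ^ n - X : K[X]) * f.derivative).natDegree
              ≤ q ^ n + (f.natDegree - 1) := by
            refine le_trans (natDegree_mul_le) ?_
            have hx : (X ^ q ^ n - X : K[X]).natDegree ≤ q ^ n := by
              refine le_trans (natDegree_sub_le _ _) ?_
              simp only [natDegree_X_pow, natDegree_X]
              have : 1 ≤ q ^ n := Nat.one_le_pow _ _ (by omega)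
              omega
            exact Nat.add_le_add hx (natDegree_derivative_le f)
          rw [heq] at h1
          rw [h1] at h3
          have hqn1 : 1 ≤ q ^ n := Nat.one_le_pow _ _ (by omega)
          have hmul : f.natDegree * (q - 1) + f.natDegree = q * f.natDegree := by
            have : q - 1 + 1 = q := by omega
            calc f.natDegree * (q - 1) + f.natDegree = f.natDegree * (q - 1 + 1) := by ring
            _ = q * f.natDegree := by rw [this]; ring
          omega
    calc m * (q - 1) ≤ f.natDegree * (q - 1) := Nat.mul_le_mul_right _ hmD
    _ ≤ q ^ n - 1 := hD
  have hlt : ∀ m : ℕ, f.coeff m ≠ 0 → m < q ^ n := by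
    intro m hm
    have h1 := hbnd m hm
    have h2 : m ≤ m * (q - 1) := Nat.le_mul_of_pos_right m (by omega)
    have h3 : 1 ≤ q ^ n := Nat.one_le_pow _ _ (by omega)
    omega
  have hzero : ∀ m : ℕ, q ^ n ≤ m → f.coeff m = 0 := by
    intro m hm
    by_contra h
    exact absurd (hlt m h) (by omega)
  -- last digit lemma
  have hL : ∀ m : ℕ, f.coeff m ≠ 0 → m % q ≤ 1 := by
    intro m hm
    by_contra hr
    push_neg at hr
    have hm2 : 2 ≤ m := le_trans hr (Nat.mod_le m q)
    have hmodlt : m % q < q := Nat.mod_lt _ (by omega)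
    have hmq : ¬ q ∣ m := by
      rw [Nat.dvd_iff_mod_eq_zero]; omega
    have hmlt : m < q ^ n := hlt m hm
    have hqn1 : 1 ≤ q ^ n := Nat.one_le_pow _ _ (by omega)
    -- step 1 : (m : K) = 1
    have e1 := hE m
    rw [hcq m, if_neg hmq, if_neg (by omega), if_pos (by omega), coeff_derivative,
      show m - 1 + 1 = m from by omega] at e1
    have hcast1 : ((m - 1 : ℕ) : K) + 1 = (m : K) := by
      rw [Nat.cast_sub (by omega : 1 ≤ m), Nat.cast_one]; ring
    rw [hcast1] at e1
    have hK1 : (m : K) = 1 := by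
      have h5 : f.coeff m * ((m : K) - 1) = 0 := by linear_combination e1
      rcases mul_eq_zero.mp h5 with h | h
      · exact absurd h hm
      · exact sub_eq_zero.mp h
    -- step 2 : f.coeff m = 0
    set m' := m + q ^ n - 1 with hm'
    have hm'mod : m' % q = m % q - 1 := by
      have hqq : q ^ n = q * q ^ (n - 1) := by
        rw [← pow_succ']; congr 1; omega
      have h6 : m' = m - 1 + q * q ^ (n - 1) := by omega
      rw [h6, Nat.add_mul_mod_self_left,
        show m - 1 = q * (m / q) + (m % q - 1) from by
          have := Nat.div_add_mod m q; omega,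
        Nat.mul_add_mod, Nat.mod_eq_of_lt (by omega)]
    have hqm' : ¬ q ∣ m' := by
      rw [Nat.dvd_iff_mod_eq_zero]; omega
    have e2 := hE m'
    rw [hcq m', if_neg hqm', if_pos (by omega), if_pos (by omega), coeff_derivative,
      coeff_derivative, show m' - q ^ n + 1 = m from by omega,
      show m' - 1 + 1 = m' from by omega, show m' - q ^ n = m - 1 from by omega,
      hzero m' (by omega), hcast1, hK1] at e2
    simp only [zero_mul, sub_zero, zero_sub, mul_one, sub_self] at e2
    exact hm e2.symm
  -- rotation lemma
  have hrot : ∀ m : ℕ, f.coeff m ≠ 0 → f.coeff (m / q + (m % q) * q ^ (n - 1)) ≠ 0 := by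
    intro m hm
    have hr : m % q = 0 ∨ m % q = 1 := by have := hL m hm; omega
    have hmlt : m < q ^ n := hlt m hm
    have hqn1 : 1 ≤ q ^ n := Nat.one_le_pow _ _ (by omega)
    have hqq : q ^ n = q * q ^ (n - 1) := by rw [← pow_succ']; congr 1; omega
    rcases hr with h0 | h1
    · -- last digit 0
      rw [h0, zero_mul, add_zero]
      obtain ⟨u, rfl⟩ : ∃ u, m = q * u := by
        obtain ⟨u, hu⟩ := (Nat.dvd_iff_mod_eq_zero).mpr h0
        exact ⟨u, hu⟩
      rw [Nat.mul_div_cancel_left _ (by omega : 0 < q)]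
      rcases Nat.eq_zero_or_pos u with rfl | hu0
      · simpa using hm
      · have h1u : 1 ≤ q * u := Nat.mul_pos (by omega) hu0
        have e := hE (q * u)
        rw [hcq (q * u), if_pos ⟨u, rfl⟩, Nat.mul_div_cancel_left _ (by omega : 0 < q),
          if_neg (by omega), if_pos h1u, coeff_derivative,
          show q * u - 1 + 1 = q * u from by omega] at e
        have hc : ((q * u - 1 : ℕ) : K) + 1 = 0 := by
          rw [Nat.cast_sub h1u, Nat.cast_one, Nat.cast_mul, hqK]
          ring
        rw [hc, mul_zero] at e
        intro hz
        rw [hz, zero_pow (by omega : q ≠ 0)] at e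
        apply hm
        linear_combination -e
    · -- last digit 1
      rw [h1, one_mul]
      obtain ⟨u, rfl⟩ : ∃ u, m = q * u + 1 :=
        ⟨m / q, by conv_lhs => rw [← Nat.div_add_mod m q, h1]⟩
      rw [show (q * u + 1) / q = u from by
        rw [Nat.mul_add_div (by omega : 0 < q), Nat.div_eq_of_lt (by omega : 1 < q), add_zero]]
      have e := hE (q * u + q ^ n)
      have hge : q ^ n ≤ q * u + q ^ n := by omega
      rw [hcq (q * u + q ^ n), if_pos ⟨u + q ^ (n - 1), by rw [hqq]; ring⟩,
        if_pos hge, if_pos (by omega), coeff_derivative, coeff_derivative,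
        Nat.add_sub_cancel,
        show q * u + q ^ n - 1 + 1 = q * u + q ^ n from by omega,
        show (q * u + q ^ n) / q = u + q ^ (n - 1) from by
          rw [hqq, ← Nat.mul_add, Nat.mul_div_cancel_left _ (by omega : 0 < q)],
        hzero _ hge] at e
      have hc : ((q * u : ℕ) : K) + 1 = 1 := by
        rw [Nat.cast_mul, hqK]; ring
      rw [hc, mul_one] at e
      intro hz
      rw [hz, zero_pow (by omega : q ≠ 0)] at e
      apply hm
      linear_combination -e
  -- all digits ≤ 1
  have hdig : ∀ i : ℕ, ∀ m : ℕ, f.coeff m ≠ 0 → m / q ^ i % q ≤ 1 := by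
    intro i
    induction i with
    | zero => intro m hm; simpa using hL m hm
    | succ i ih =>
      intro m hm
      have hmlt : m < q ^ n := hlt m hm
      by_cases hin : n ≤ i + 1
      · have hsmall : m < q ^ (i + 1) :=
          lt_of_lt_of_le hmlt (Nat.pow_le_pow_right (by omega) hin)
        rw [Nat.div_eq_of_lt hsmall]
        simp
      · have h2 := ih _ (hrot m hm)
        have key : (m / q + m % q * q ^ (n - 1)) / q ^ i % q = m / q ^ (i + 1) % q := by
          have h3 : q ^ (n - 1) = q ^ (n - 1 - i) * q ^ i := by
            rw [← pow_add]; congr 1; omega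
          rw [h3, ← mul_assoc, Nat.add_mul_div_right _ _ (Nat.pow_pos (n := i) (by omega)),
            Nat.div_div_eq_div_mul, ← pow_succ',
            show q ^ (n - 1 - i) = q ^ (n - 2 - i) * q from by rw [← pow_succ]; congr 1; omega,
            ← mul_assoc, Nat.add_mul_mod_self_right]
        rw [← key]; exact h2
  refine ⟨fun i => k / q ^ i % q, fun i => hdig i k hk, ?_⟩
  have hksum : ∀ N m : ℕ, m % q ^ N = ∑ i ∈ Finset.range N, m / q ^ i % q * q ^ i := by
    intro N
    induction N with
    | zero => intro m; simp [Nat.mod_one]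
    | succ N ihN =>
      intro m
      rw [Finset.sum_range_succ, ← ihN m, pow_succ, Nat.mod_mul]
      ring
  have hfin := hksum n k
  rw [Nat.mod_eq_of_lt (hlt k hk)] at hfin
  exact hfin
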